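/- Let G be a simple graph on n ≥ 4 vertices with all degrees positive and α real. Then for any three distinct vertices with degrees d_j, d_k, d_ℓ: Z_{2α}(G) ≥ d_ℓ^{2α} + (Z_α(G) − d_ℓ^α)²/(n−1) + (1/2)(d_j^α − d_k^α)² + (2(n−1)/(n−3))·((Z_α(G) − d_ℓ^α)/(n−1) − (d_j^α + d_k^α)/2)². -/
import Mathlib


open Finset

theorem stmt8 {V : Type*} [Fintype V] [DecidableEq V] (G : SimpleGraph V)
    [DecidableRel G.Adj] (hn : 4 ≤ Fintype.card V)
    (hdeg : ∀ v : V, 0 < G.degree v) (α : ℝ) (j k l : V)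
    (hjk : j ≠ k) (hjl : j ≠ l) (hkl : k ≠ l) :
    ∑ v : V, (G.degree v : ℝ) ^ (2 * α) ≥
      (G.degree l : ℝ) ^ (2 * α)
      + ((∑ v : V, (G.degree v : ℝ) ^ α) - (G.degree l : ℝ) ^ α) ^ 2
          / ((Fintype.card V : ℝ) - 1)
      + (1 / 2) * ((G.degree j : ℝ) ^ α - (G.degree k : ℝ) ^ α) ^ 2
      + (2 * ((Fintype.card V : ℝ) - 1) / ((Fintype.card V : ℝ) - 3)) *
          (((∑ v : V, (G.degree v : ℝ) ^ α) - (G.degree l : ℝ) ^ α)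
              / ((Fintype.card V : ℝ) - 1)
            - ((G.degree j : ℝ) ^ α + (G.degree k : ℝ) ^ α) / 2) ^ 2 := by
  have hpos : ∀ v : V, (0:ℝ) < (G.degree v : ℝ) := fun v => by exact_mod_cast hdeg v
  have hsq : ∀ v : V, (G.degree v : ℝ) ^ (2 * α) = ((G.degree v : ℝ) ^ α) ^ 2 := by
    intro v
    rw [← Real.rpow_natCast ((G.degree v : ℝ) ^ α) 2, ← Real.rpow_mul (hpos v).le]
    norm_num [mul_comm]
  simp_rw [hsq]
  set n := Fintype.card V with hn'
  have hjkl : j ∉ ({k, l} : Finset V) := by simp [hjk, hjl]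
  have hkl' : k ∉ ({l} : Finset V) := by simp [hkl]
  have hcard3 : ({j, k, l} : Finset V).card = 3 := by
    rw [card_insert_of_notMem hjkl, card_insert_of_notMem hkl', card_singleton]
  set T := univ \ ({j, k, l} : Finset V) with hTdef
  have hsplit : ∀ g : V → ℝ, ∑ v : V, g v = g j + g k + g l + ∑ v ∈ T, g v := by
    intro g
    rw [hTdef, ← Finset.sum_sdiff (subset_univ ({j, k, l} : Finset V))]
    rw [sum_insert hjkl, sum_insert hkl', sum_singleton]
    ring
  have hcardT : (T.card : ℝ) = (n : ℝ) - 3 := by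
    rw [hTdef, card_sdiff_of_subset (subset_univ _), hcard3, card_univ, ← hn',
      Nat.cast_sub (by omega)]
    norm_num
  have hCS : (∑ v ∈ T, (G.degree v : ℝ) ^ α) ^ 2
      ≤ ((n : ℝ) - 3) * ∑ v ∈ T, ((G.degree v : ℝ) ^ α) ^ 2 := by
    have h := sq_sum_le_card_mul_sum_sq (s := T) (f := fun v => (G.degree v : ℝ) ^ α)
    rw [hcardT] at h
    exact h
  rw [hsplit (fun v => ((G.degree v : ℝ) ^ α) ^ 2), hsplit (fun v => (G.degree v : ℝ) ^ α)]
  set a := (G.degree j : ℝ) ^ α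
  set b := (G.degree k : ℝ) ^ α
  set c := (G.degree l : ℝ) ^ α
  set t := ∑ v ∈ T, (G.degree v : ℝ) ^ α
  set q := ∑ v ∈ T, ((G.degree v : ℝ) ^ α) ^ 2
  have hn4 : (4 : ℝ) ≤ (n : ℝ) := by exact_mod_cast hn
  have hm1 : (n : ℝ) - 1 ≠ 0 := by linarith
  have hm3 : (0 : ℝ) < (n : ℝ) - 3 := by linarith
  have hq : t ^ 2 / ((n : ℝ) - 3) ≤ q := by
    rw [div_le_iff₀ hm3]
    nlinarith [hCS]
  have key : a ^ 2 + b ^ 2 + t ^ 2 / ((n : ℝ) - 3)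
      = (a + b + c + t - c) ^ 2 / ((n : ℝ) - 1)
        + (1 / 2) * (a - b) ^ 2
        + (2 * ((n : ℝ) - 1) / ((n : ℝ) - 3)) *
            ((a + b + c + t - c) / ((n : ℝ) - 1) - (a + b) / 2) ^ 2 := by
    field_simp
    ring
  linarith [key, hq]
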